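/- Fix μ̂ ∈ ℝ and σ̂ > 0, fix constants C > 0 and Ψ > 0, and define the surrogate reward r : ℝ → ℝ by r(a) = −C·(μ̂ + σ̂·λ((a − μ̂)/σ̂) − a)·Ψ, where λ is the inverse Mills ratio. Then r is differentiable on ℝ with r'(a) = C·Ψ·(1 − λ'((a − μ̂)/σ̂)) > 0 for every a ∈ ℝ; in particular r is strictly increasing, so the reward gradient consistently incentivizes increasing the action. -/

import Mathlib

open Real MeasureTheory

/-- Standard normal density `φ(z) = exp(−z²/2)/√(2π)`. -/
noncomputable def stdNormalPdf (z : ℝ) : ℝ :=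
  Real.exp (-z ^ 2 / 2) / Real.sqrt (2 * Real.pi)

/-- Standard normal cumulative distribution function `Φ`. -/
noncomputable def stdNormalCdf (z : ℝ) : ℝ :=
  ∫ t in Set.Iic z, stdNormalPdf t

/-- Inverse Mills ratio `λ(z) = φ(z)/(1 − Φ(z))`. -/
noncomputable def mills (z : ℝ) : ℝ :=
  stdNormalPdf z / (1 - stdNormalCdf z)

lemma pdf_pos (z : ℝ) : 0 < stdNormalPdf z := by
  unfold stdNormalPdf
  positivity

lemma pdf_cont : Continuous stdNormalPdf := by
  unfold stdNormalPdf
  fun_prop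

lemma pdf_integrable : Integrable stdNormalPdf := by
  have h : Integrable (fun x : ℝ => Real.exp (-(1/2) * x ^ 2)) :=
    integrable_exp_neg_mul_sq (by norm_num)
  have := h.div_const (Real.sqrt (2 * Real.pi))
  refine this.congr ?_
  filter_upwards with x
  unfold stdNormalPdf
  ring_nf

lemma integral_pdf : ∫ x, stdNormalPdf x = 1 := by
  unfold stdNormalPdf
  rw [integral_div]
  have h := integral_gaussian (1/2)
  have h2 : ∫ x : ℝ, Real.exp (-x ^ 2 / 2) = Real.sqrt (2 * Real.pi) := by
    rw [show (fun x : ℝ => Real.exp (-x ^ 2 / 2)) = fun x : ℝ => Real.exp (-(1/2) * x ^ 2) by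
      funext x; ring_nf]
    rw [h]; norm_num; ring
  rw [h2, div_self]
  positivity

lemma hasDerivAt_pdf (z : ℝ) : HasDerivAt stdNormalPdf (-z * stdNormalPdf z) z := by
  have h1 : HasDerivAt (fun z : ℝ => -z ^ 2 / 2) (-z) z := by
    have := ((hasDerivAt_pow 2 z).neg).div_const 2
    exact this.congr_deriv (by norm_num; ring)
  have h2 := (h1.exp).div_const (Real.sqrt (2 * Real.pi))
  refine h2.congr_deriv ?_
  unfold stdNormalPdf
  ring

lemma tendsto_pdf : Filter.Tendsto stdNormalPdf Filter.atTop (nhds 0) := by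
  have h1 : Filter.Tendsto (fun z : ℝ => -z ^ 2 / 2) Filter.atTop Filter.atBot := by
    apply Filter.Tendsto.atBot_div_const (by norm_num)
    exact Filter.tendsto_neg_atBot_iff.mpr (Filter.tendsto_pow_atTop (by norm_num))
  have h2 := (Real.tendsto_exp_atBot.comp h1).div_const (Real.sqrt (2 * Real.pi))
  simp only [Function.comp, zero_div] at h2
  exact h2

lemma one_sub_cdf (z : ℝ) : 1 - stdNormalCdf z = ∫ t in Set.Ioi z, stdNormalPdf t := by
  have := intervalIntegral.integral_Iic_add_Ioi (μ := volume) (b := z)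
    pdf_integrable.integrableOn pdf_integrable.integrableOn
  rw [integral_pdf] at this
  unfold stdNormalCdf
  linarith

lemma one_sub_cdf_pos (z : ℝ) : 0 < 1 - stdNormalCdf z := by
  rw [one_sub_cdf]
  rw [setIntegral_pos_iff_support_of_nonneg_ae]
  · have hsupp : Function.support stdNormalPdf ∩ Set.Ioi z = Set.Ioi z := by
      rw [Set.inter_eq_right]
      intro x _
      exact (pdf_pos x).ne'
    rw [hsupp]
    simp [Real.volume_Ioi]
  · filter_upwards with x using (pdf_pos x).le
  · exact pdf_integrable.integrableOn

lemma hasDerivAt_cdf (z : ℝ) : HasDerivAt stdNormalCdf (stdNormalPdf z) z := by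
  have heq : stdNormalCdf = fun u => stdNormalCdf 0 + ∫ t in (0:ℝ)..u, stdNormalPdf t := by
    funext u
    have := intervalIntegral.integral_Iic_sub_Iic (μ := volume) (f := stdNormalPdf)
      pdf_integrable.integrableOn pdf_integrable.integrableOn (a := 0) (b := u)
    unfold stdNormalCdf
    linarith
  rw [heq]
  exact (intervalIntegral.integral_hasDerivAt_right
    (pdf_integrable.intervalIntegrable)
    (pdf_cont.stronglyMeasurable.stronglyMeasurableAtFilter)
    pdf_cont.continuousAt).const_add _

lemma mills_pos (z : ℝ) : 0 < mills z :=
  div_pos (pdf_pos z) (one_sub_cdf_pos z)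

lemma integrable_mul_pdf : Integrable (fun t : ℝ => t * stdNormalPdf t) := by
  have h : Integrable (fun x : ℝ => x * Real.exp (-(1/2) * x ^ 2)) := by
    simpa using integrable_mul_exp_neg_mul_sq (by norm_num : (0:ℝ) < 1/2)
  have := h.div_const (Real.sqrt (2 * Real.pi))
  refine this.congr ?_
  filter_upwards with x
  unfold stdNormalPdf
  ring_nf

lemma integral_mul_pdf_Ioi (z : ℝ) :
    ∫ t in Set.Ioi z, t * stdNormalPdf t = stdNormalPdf z := by
  have h := integral_Ioi_of_hasDerivAt_of_tendsto' (a := z) (m := 0)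
    (f := fun t => -stdNormalPdf t) (f' := fun t => t * stdNormalPdf t)
    (fun x _ => by have := (hasDerivAt_pdf x).neg; simp at this; exact this)
    integrable_mul_pdf.integrableOn
    (by simpa using tendsto_pdf.neg)
  rw [h]; ring

lemma mills_gt (z : ℝ) : z * (1 - stdNormalCdf z) < stdNormalPdf z := by
  have hpos : 0 < ∫ t in Set.Ioi z, (t - z) * stdNormalPdf t := by
    rw [setIntegral_pos_iff_support_of_nonneg_ae]
    · have hsupp : Function.support (fun t => (t - z) * stdNormalPdf t) ∩ Set.Ioi z
          = Set.Ioi z := by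
        rw [Set.inter_eq_right]
        intro x hx
        have : (0:ℝ) < (x - z) * stdNormalPdf x :=
          mul_pos (by simpa using sub_pos.mpr (Set.mem_Ioi.mp hx)) (pdf_pos x)
        exact this.ne'
      rw [hsupp]
      simp [Real.volume_Ioi]
    · rw [Filter.EventuallyLE, ae_restrict_iff' measurableSet_Ioi]
      filter_upwards with x hx
      exact mul_nonneg (by simpa using (le_of_lt hx)) (pdf_pos x).le
    · exact (integrable_mul_pdf.sub (pdf_integrable.const_mul z)).integrableOn.congr_fun
        (by intro x _; simp; ring) measurableSet_Ioi
  have heq : ∫ t in Set.Ioi z, (t - z) * stdNormalPdf t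
      = stdNormalPdf z - z * (1 - stdNormalCdf z) := by
    have h1 : ∫ t in Set.Ioi z, (t - z) * stdNormalPdf t
        = (∫ t in Set.Ioi z, t * stdNormalPdf t) - z * ∫ t in Set.Ioi z, stdNormalPdf t := by
      rw [← integral_const_mul, ← integral_sub integrable_mul_pdf.integrableOn
        ((pdf_integrable.const_mul z).integrableOn)]
      congr 1; funext t; ring
    rw [h1, integral_mul_pdf_Ioi, ← one_sub_cdf]
  linarith [heq ▸ hpos]

lemma hasDerivAt_mills (z : ℝ) :
    HasDerivAt mills (mills z * (mills z - z)) z := by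
  have h := (hasDerivAt_pdf z).div ((hasDerivAt_cdf z).const_sub 1) (one_sub_cdf_pos z).ne'
  refine h.congr_deriv ?_
  unfold mills
  have hne := (one_sub_cdf_pos z).ne'
  field_simp
  ring

lemma tendsto_one_sub_cdf :
    Filter.Tendsto (fun z => 1 - stdNormalCdf z) Filter.atTop (nhds 0) := by
  refine squeeze_zero_norm' ?_ tendsto_pdf
  filter_upwards [Filter.eventually_ge_atTop (1:ℝ)] with z hz
  have h1 : 0 ≤ 1 - stdNormalCdf z := (one_sub_cdf_pos z).le
  rw [Real.norm_eq_abs, abs_of_nonneg h1, one_sub_cdf]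
  calc ∫ t in Set.Ioi z, stdNormalPdf t
      ≤ ∫ t in Set.Ioi z, t * stdNormalPdf t := by
        apply setIntegral_mono_on pdf_integrable.integrableOn
          integrable_mul_pdf.integrableOn measurableSet_Ioi
        intro x hx
        have hx1 : (1:ℝ) ≤ x := le_of_lt (lt_of_le_of_lt hz hx)
        nlinarith [pdf_pos x]
    _ = stdNormalPdf z := integral_mul_pdf_Ioi z

lemma integrable_H : Integrable (fun t : ℝ => 2 * stdNormalPdf t / (1 + t ^ 2) ^ 2) := by
  have hcont : Continuous (fun t : ℝ => 2 * stdNormalPdf t / (1 + t ^ 2) ^ 2) :=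
    (continuous_const.mul pdf_cont).div (by continuity) (fun x => by positivity)
  apply (pdf_integrable.const_mul 2).mono' hcont.aestronglyMeasurable
  filter_upwards with x
  have hp := pdf_pos x
  have h1 : (1:ℝ) ≤ (1 + x ^ 2) ^ 2 := by nlinarith [sq_nonneg x]
  rw [Real.norm_eq_abs, abs_of_nonneg (by positivity)]
  rw [div_le_iff₀ (by positivity)]
  nlinarith [mul_le_mul_of_nonneg_left h1 (le_of_lt (mul_pos (by norm_num : (0:ℝ)<2) hp))]

lemma Hpos (z : ℝ) :
    z * stdNormalPdf z / (1 + z ^ 2) < 1 - stdNormalCdf z := by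
  have hderiv : ∀ x : ℝ, HasDerivAt
      (fun t => -((1 - stdNormalCdf t) - t * stdNormalPdf t / (1 + t ^ 2)))
      (2 * stdNormalPdf x / (1 + x ^ 2) ^ 2) x := by
    intro x
    have hden : (1 + x ^ 2) ≠ 0 := by positivity
    have h1 : HasDerivAt (fun t : ℝ => 1 - stdNormalCdf t) (-stdNormalPdf x) x :=
      (hasDerivAt_cdf x).const_sub 1
    have h2 : HasDerivAt (fun t : ℝ => t * stdNormalPdf t)
        (1 * stdNormalPdf x + x * (-x * stdNormalPdf x)) x :=
      (hasDerivAt_id x).mul (hasDerivAt_pdf x)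
    have h3 : HasDerivAt (fun t : ℝ => 1 + t ^ 2) (0 + 2 * x) x := by
      exact ((hasDerivAt_pow 2 x).const_add 1).congr_deriv (by norm_num)
    have h4 := h2.div h3 hden
    have h5 := (h1.sub h4).neg
    refine h5.congr_deriv ?_
    field_simp
    ring
  have htend : Filter.Tendsto
      (fun t => -((1 - stdNormalCdf t) - t * stdNormalPdf t / (1 + t ^ 2)))
      Filter.atTop (nhds 0) := by
    have ha : Filter.Tendsto (fun t : ℝ => t * stdNormalPdf t / (1 + t ^ 2))
        Filter.atTop (nhds 0) := by
      refine squeeze_zero_norm' ?_ tendsto_pdf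
      filter_upwards [Filter.eventually_ge_atTop (0:ℝ)] with t ht
      have h1 : 0 < 1 + t ^ 2 := by positivity
      have hp := pdf_pos t
      rw [Real.norm_eq_abs, abs_of_nonneg (by positivity)]
      rw [div_le_iff₀ h1]
      nlinarith [mul_nonneg hp.le (sq_nonneg (t - 1/2))]
    have := (tendsto_one_sub_cdf.sub ha).neg
    simpa using this
  have h := integral_Ioi_of_hasDerivAt_of_tendsto' (a := z) (m := 0)
    (fun x _ => hderiv x) integrable_H.integrableOn htend
  have hpos : 0 < ∫ x in Set.Ioi z, 2 * stdNormalPdf x / (1 + x ^ 2) ^ 2 := by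
    rw [setIntegral_pos_iff_support_of_nonneg_ae]
    · have hsupp : Function.support (fun t => 2 * stdNormalPdf t / (1 + t ^ 2) ^ 2)
          ∩ Set.Ioi z = Set.Ioi z := by
        rw [Set.inter_eq_right]
        intro x _
        have : (0:ℝ) < 2 * stdNormalPdf x / (1 + x ^ 2) ^ 2 := by
          have := pdf_pos x; positivity
        exact this.ne'
      rw [hsupp]; simp [Real.volume_Ioi]
    · filter_upwards with x
      have := pdf_pos x; positivity
    · exact integrable_H.integrableOn
  rw [h] at hpos
  linarith

noncomputable def millsAux (z : ℝ) : ℝ :=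
  stdNormalPdf z ^ 2 - z * stdNormalPdf z * (1 - stdNormalCdf z) - (1 - stdNormalCdf z) ^ 2

lemma hasDerivAt_millsAux (x : ℝ) :
    HasDerivAt millsAux
      (stdNormalPdf x * ((1 + x ^ 2) * (1 - stdNormalCdf x) - x * stdNormalPdf x)) x := by
  have h1 : HasDerivAt (fun t : ℝ => 1 - stdNormalCdf t) (-stdNormalPdf x) x :=
    (hasDerivAt_cdf x).const_sub 1
  have h2 := hasDerivAt_pdf x
  have h3 := ((h2.pow 2).sub (((hasDerivAt_id x).mul h2).mul h1)).sub (h1.pow 2)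
  refine h3.congr_deriv ?_
  simp only [id_eq, Pi.mul_apply]
  ring

lemma millsAux_tendsto : Filter.Tendsto millsAux Filter.atTop (nhds 0) := by
  have h1 : Filter.Tendsto (fun z => stdNormalPdf z ^ 2) Filter.atTop (nhds 0) := by
    simpa using tendsto_pdf.pow 2
  have h2 : Filter.Tendsto (fun z => (1 - stdNormalCdf z) ^ 2) Filter.atTop (nhds 0) := by
    simpa using tendsto_one_sub_cdf.pow 2
  have h3 : Filter.Tendsto (fun z => z * stdNormalPdf z * (1 - stdNormalCdf z))
      Filter.atTop (nhds 0) := by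
    refine squeeze_zero_norm' ?_ h1
    filter_upwards [Filter.eventually_ge_atTop (0:ℝ)] with z hz
    have hp := pdf_pos z
    have hc := one_sub_cdf_pos z
    have hm := mills_gt z
    rw [Real.norm_eq_abs, abs_of_nonneg (by positivity)]
    calc z * stdNormalPdf z * (1 - stdNormalCdf z)
        = stdNormalPdf z * (z * (1 - stdNormalCdf z)) := by ring
      _ ≤ stdNormalPdf z * stdNormalPdf z := by nlinarith
      _ = stdNormalPdf z ^ 2 := by ring
  have := (h1.sub h3).sub h2
  show Filter.Tendsto (fun z => stdNormalPdf z ^ 2 - z * stdNormalPdf z * (1 - stdNormalCdf z) - (1 - stdNormalCdf z) ^ 2) _ _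
  simpa using this

lemma millsAux_neg (z : ℝ) : millsAux z < 0 := by
  have hmono : StrictMono millsAux := by
    apply strictMono_of_deriv_pos
    intro x
    rw [(hasDerivAt_millsAux x).deriv]
    have hp := pdf_pos x
    have hH := Hpos x
    have h1 : 0 < 1 + x ^ 2 := by positivity
    rw [div_lt_iff₀ h1] at hH
    nlinarith
  have hle : millsAux (z + 1) ≤ 0 := by
    apply ge_of_tendsto millsAux_tendsto
    filter_upwards [Filter.eventually_ge_atTop (z + 1)] with w hw
    exact (hmono.le_iff_le.mpr hw)
  calc millsAux z < millsAux (z + 1) := hmono (by linarith)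
    _ ≤ 0 := hle

lemma deriv_mills_lt_one (z : ℝ) : mills z * (mills z - z) < 1 := by
  have hc := one_sub_cdf_pos z
  have hne := hc.ne'
  have h := millsAux_neg z
  unfold millsAux at h
  have heq : mills z * (mills z - z)
      = (stdNormalPdf z ^ 2 - z * stdNormalPdf z * (1 - stdNormalCdf z))
        / (1 - stdNormalCdf z) ^ 2 := by
    unfold mills
    field_simp
  rw [heq, div_lt_one (by positivity)]
  linarith

lemma deriv_mills_pos (z : ℝ) : 0 < mills z * (mills z - z) := by
  have hc := one_sub_cdf_pos z
  have hm := mills_gt z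
  have hz : z < mills z := by
    rw [mills, lt_div_iff₀ hc]
    linarith
  exact mul_pos (mills_pos z) (by linarith)

lemma hasDerivAt_r (μhat σhat C Ψ : ℝ) (hσ : 0 < σhat) (a : ℝ) :
    HasDerivAt (fun a : ℝ => -C * (μhat + σhat * mills ((a - μhat) / σhat) - a) * Ψ)
      (C * Ψ * (1 - deriv mills ((a - μhat) / σhat))) a := by
  set z := (a - μhat) / σhat with hzdef
  have hz : HasDerivAt (fun a : ℝ => (a - μhat) / σhat) (1 / σhat) a := by
    simpa using ((hasDerivAt_id a).sub_const μhat).div_const σhat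
  have hm : HasDerivAt (fun a : ℝ => mills ((a - μhat) / σhat))
      (mills z * (mills z - z) * (1 / σhat)) a :=
    by have := (hasDerivAt_mills z).comp a hz; exact this
  have hmain := ((((hm.const_mul σhat).const_add μhat).sub (hasDerivAt_id a)).const_mul
    (-C)).mul_const Ψ
  have hd : deriv mills z = mills z * (mills z - z) := (hasDerivAt_mills z).deriv
  refine hmain.congr_deriv ?_
  rw [hd]
  field_simp
  ring


/-- **Proposition 2, part 1 (Gradient Consistency).** For `σ̂ > 0`, `C > 0`,
`Ψ > 0`, the surrogate reward `r(a) = −C·(μ̂ + σ̂·λ((a − μ̂)/σ̂) − a)·Ψ` is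
differentiable with `r'(a) = C·Ψ·(1 − λ'((a − μ̂)/σ̂)) > 0` for every `a`;
in particular `r` is strictly increasing. -/
theorem surrogateReward_gradient_consistency
    (μhat σhat C Ψ : ℝ) (hσ : 0 < σhat) (hC : 0 < C) (hΨ : 0 < Ψ) :
    Differentiable ℝ (fun a : ℝ => -C * (μhat + σhat * mills ((a - μhat) / σhat) - a) * Ψ) ∧
    (∀ a : ℝ,
      deriv (fun a : ℝ => -C * (μhat + σhat * mills ((a - μhat) / σhat) - a) * Ψ) a
        = C * Ψ * (1 - deriv mills ((a - μhat) / σhat)) ∧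
      0 < deriv (fun a : ℝ => -C * (μhat + σhat * mills ((a - μhat) / σhat) - a) * Ψ) a) ∧
    StrictMono (fun a : ℝ => -C * (μhat + σhat * mills ((a - μhat) / σhat) - a) * Ψ) := by
  have hderiv : ∀ a : ℝ,
      deriv (fun a : ℝ => -C * (μhat + σhat * mills ((a - μhat) / σhat) - a) * Ψ) a
        = C * Ψ * (1 - deriv mills ((a - μhat) / σhat)) :=
    fun a => (hasDerivAt_r μhat σhat C Ψ hσ a).deriv
  have hpos : ∀ a : ℝ,
      0 < deriv (fun a : ℝ => -C * (μhat + σhat * mills ((a - μhat) / σhat) - a) * Ψ) a := by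
    intro a
    rw [hderiv a]
    set z := (a - μhat) / σhat
    have hd : deriv mills z = mills z * (mills z - z) := (hasDerivAt_mills z).deriv
    have h1 := deriv_mills_lt_one z
    rw [hd]
    have : 0 < 1 - mills z * (mills z - z) := by linarith
    positivity
  refine ⟨fun a => (hasDerivAt_r μhat σhat C Ψ hσ a).differentiableAt, fun a => ⟨hderiv a, hpos a⟩,
    strictMono_of_deriv_pos hpos⟩
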